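/- Let S be a sphere of radius r centered at c in ℝ^N, let V_α ∋ c be an affine subspace through c, let z ∈ S_α = S ∩ V_α, and for ε < r let F_α(z,ε) = (ℝ₊·(z-c) × V_α^⊥(ε)) ∩ S be the (α,ε)-spherical cap with top at z. Then F_α(z,ε) ⊆ { x ∈ S : ‖x - z‖ ≤ √2 · ε }. -/

import Mathlib

open scoped RealInnerProductSpace

theorem stmt_11 (N : ℕ) (c : EuclideanSpace ℝ (Fin N)) (r : ℝ) (hr : 0 < r)
    (V : Submodule ℝ (EuclideanSpace ℝ (Fin N)))
    (z : EuclideanSpace ℝ (Fin N)) (hzS : ‖z - c‖ = r) (hzV : z - c ∈ V)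
    (ε : ℝ) (hε : 0 < ε) (hεr : ε < r) :
    {x : EuclideanSpace ℝ (Fin N) | ‖x - c‖ = r ∧
        ∃ t : ℝ, 0 ≤ t ∧ ∃ w ∈ Vᗮ, ‖w‖ < ε ∧ x = c + t • (z - c) + w} ⊆
      {x : EuclideanSpace ℝ (Fin N) | ‖x - c‖ = r ∧ ‖x - z‖ ≤ Real.sqrt 2 * ε} := by
  rintro x ⟨hx, t, ht, w, hwV, hwε, rfl⟩
  refine ⟨hx, ?_⟩
  have horth : ⟪z - c, w⟫ = 0 := (Submodule.mem_orthogonal V w).mp hwV (z - c) hzV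
  have key : ∀ s : ℝ, ‖s • (z - c) + w‖ ^ 2 = s ^ 2 * r ^ 2 + ‖w‖ ^ 2 := by
    intro s
    rw [norm_add_sq_real, real_inner_smul_left, horth, norm_smul, mul_pow, hzS]
    simp [sq_abs]
  have h1 : t ^ 2 * r ^ 2 + ‖w‖ ^ 2 = r ^ 2 := by
    have := key t
    rw [show t • (z - c) + w = c + t • (z - c) + w - c by abel, hx] at this
    linarith
  have hr2 : 0 < r ^ 2 := by positivity
  have ht2 : t ^ 2 ≤ 1 := by
    have h := (mul_le_mul_iff_of_pos_right hr2).mp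
      (by nlinarith [sq_nonneg (‖w‖)] : t ^ 2 * r ^ 2 ≤ 1 * r ^ 2)
    linarith
  have ht1 : t ≤ 1 := by nlinarith [sq_nonneg (t - 1)]
  have hxz : c + t • (z - c) + w - z = (t - 1) • (z - c) + w := by
    rw [sub_smul, one_smul]; abel
  have h2 : ‖c + t • (z - c) + w - z‖ ^ 2 ≤ 2 * ε ^ 2 := by
    rw [hxz, key (t - 1)]
    nlinarith [norm_nonneg w, sq_nonneg t]
  have hs2 : Real.sqrt 2 ^ 2 = 2 := Real.sq_sqrt (by norm_num)
  nlinarith [norm_nonneg (c + t • (z - c) + w - z), Real.sqrt_nonneg 2, hε.le,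
    mul_nonneg (Real.sqrt_nonneg 2) hε.le]
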